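/- Let k ≥ 2 and r ≥ 0 be integers and let E ⊆ ℕ₀ be a k-arid set of rank ≤ r. Then there is a constant C such that for all N ≥ 2, max_{M ∈ ℕ₀} |E ∩ [M, M+N)| ≤ C·(log N)^r. -/

import Mathlib

open Filter Topology

/-- The `k`-kernel of a sequence: all subsequences `n ↦ f (k^l * n + r)` with `0 ≤ r < k^l`. -/
def kKernel {Ω : Type*} (k : ℕ) (f : ℕ → Ω) : Set (ℕ → Ω) :=
  {g | ∃ l r : ℕ, r < k ^ l ∧ g = fun n => f (k ^ l * n + r)}

/-- A sequence is `k`-automatic if its `k`-kernel is finite. -/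
def IsKAutomatic {Ω : Type*} (k : ℕ) (f : ℕ → Ω) : Prop :=
  (kKernel k f).Finite

/-- A sequence `f` is weakly periodic if every restriction `n ↦ f (a n + b)` (with `a ≥ 1`)
agrees along two distinct residues `r ≠ r'` modulo some `q ≥ 1`. -/
def WeaklyPeriodic {Ω : Type*} (f : ℕ → Ω) : Prop :=
  ∀ a b : ℕ, 0 < a → ∃ q r r' : ℕ, 0 < q ∧ r ≠ r' ∧
    ∀ n : ℕ, f (a * (q * n + r) + b) = f (a * (q * n + r') + b)

/-- A sequence is periodic (with some period `q ≥ 1`). -/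
def PeriodicSeq {Ω : Type*} (f : ℕ → Ω) : Prop :=
  ∃ q : ℕ, 0 < q ∧ ∀ n : ℕ, f (n + q) = f n

/-- The `l`-fold concatenation of the word `w` with itself. -/
def wpow {σ : Type*} (w : List σ) (l : ℕ) : List σ := (List.replicate l w).flatten

/-- The integer whose base-`k` expansion (most significant digit first) is the word `u`. -/
def wordVal (k : ℕ) (u : List (Fin k)) : ℕ :=
  u.foldl (fun acc d => acc * k + (d : ℕ)) 0

/-- A basic `k`-arid set of words of rank `≤ r`:
`{v₀ w₁^{l₁} v₁ w₂^{l₂} ⋯ w_r^{l_r} v_r : l₁, …, l_r ∈ ℕ}`. -/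
def IsBasicArid (k r : ℕ) (A : Set (List (Fin k))) : Prop :=
  ∃ (v : Fin (r + 1) → List (Fin k)) (w : Fin r → List (Fin k)),
    A = {u | ∃ l : Fin r → ℕ,
      u = (List.ofFn fun i : Fin r => v i.castSucc ++ wpow (w i) (l i)).flatten
        ++ v (Fin.last r)}

/-- A `k`-arid set of words of rank `≤ r` is a finite union of basic ones. -/
def IsArid (k r : ℕ) (A : Set (List (Fin k))) : Prop :=
  ∃ (m : ℕ) (B : Fin m → Set (List (Fin k))),
    (∀ i, IsBasicArid k r (B i)) ∧ A = ⋃ i, B i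

/-- A set `E ⊆ ℕ` is `k`-arid of rank `≤ r` if it is the set of values of a `k`-arid
set of words of rank `≤ r`. -/
def IsAridNat (k r : ℕ) (E : Set ℕ) : Prop :=
  ∃ A : Set (List (Fin k)), IsArid k r A ∧ E = wordVal k '' A

lemma wordVal_eq (k : ℕ) (u : List (Fin k)) :
    wordVal k u = List.foldl (fun acc d => acc * k + d) 0 (u.map Fin.val) := by
  simp [wordVal, ← List.map_eq_flatMap]

lemma natVal_aux (k : ℕ) (b : List ℕ) : ∀ init : ℕ,
    b.foldl (fun acc d => acc * k + d) init
      = init * k ^ b.length + b.foldl (fun acc d => acc * k + d) 0 := by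
  induction b with
  | nil => intro init; simp
  | cons d bs ih =>
    intro init
    rw [List.foldl_cons, List.foldl_cons, ih (init * k + d), ih (0 * k + d),
      List.length_cons]
    ring

lemma wordVal_append (k : ℕ) (a b : List (Fin k)) :
    wordVal k (a ++ b) = wordVal k a * k ^ b.length + wordVal k b := by
  rw [wordVal_eq, wordVal_eq, wordVal_eq, List.map_append, List.foldl_append,
    natVal_aux, List.length_map]

lemma wpow_succ {σ : Type*} (w : List σ) (l : ℕ) : wpow w (l + 1) = w ++ wpow w l := by
  simp [wpow, List.replicate_succ]

lemma wpow_zero {σ : Type*} (w : List σ) : wpow w 0 = [] := rfl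

lemma wpow_length {σ : Type*} (w : List σ) (l : ℕ) : (wpow w l).length = l * w.length := by
  induction l with
  | zero => simp [wpow]
  | succ n ih => rw [wpow_succ, List.length_append, ih]; ring

lemma wpow_nil_word {σ : Type*} (l : ℕ) : wpow ([] : List σ) l = [] := by
  induction l with
  | zero => rfl
  | succ n ih => rw [wpow_succ, ih]; rfl

lemma ncard_biUnion_le {α β : Type*} (s : Finset α) (S : α → Set β) :
    (⋃ l ∈ s, S l).ncard ≤ ∑ l ∈ s, (S l).ncard := by
  classical
  induction s using Finset.induction with
  | empty => simp
  | insert _ _ h ih =>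
    rw [Finset.set_biUnion_insert, Finset.sum_insert h]
    exact le_trans (Set.ncard_union_le _ _) (Nat.add_le_add_left ih _)

lemma basic_bound (k : ℕ) (hk : 2 ≤ k) (N : ℕ) (hN : 2 ≤ N) :
    ∀ (r : ℕ) (A : Set (List (Fin k))), IsBasicArid k r A → ∀ M : ℕ,
      ((wordVal k '' A) ∩ Set.Ico M (M + N)).ncard ≤ (Nat.clog k N + 2) ^ r := by
  have hk1 : 1 < k := hk
  set t := Nat.clog k N with htdef
  have hNkt : N ≤ k ^ t := Nat.le_pow_clog hk1 N
  intro r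
  induction r with
  | zero =>
    intro A hA M
    obtain ⟨v, w, rfl⟩ := hA
    have hsingle : {u : List (Fin k) | ∃ l : Fin 0 → ℕ,
        u = (List.ofFn fun i : Fin 0 => v i.castSucc ++ wpow (w i) (l i)).flatten
          ++ v (Fin.last 0)} = {v (Fin.last 0)} := by
      ext u
      simp
    rw [hsingle, Set.image_singleton, pow_zero]
    exact le_trans
      (Set.ncard_le_ncard Set.inter_subset_left (Set.finite_singleton _))
      (le_of_eq (Set.ncard_singleton _))
  | succ r ih =>
    intro A hA M
    obtain ⟨v, w, rfl⟩ := hA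
    set I := Set.Ico M (M + N) with hIdef
    have hIfin : I.Finite := Set.finite_Ico _ _
    set W := w (Fin.last r) with hWdef
    set vpen := v ((Fin.last r).castSucc) with hvpendef
    set vfin := v (Fin.last (r + 1)) with hvfindef
    set pre : (Fin r → ℕ) → List (Fin k) := fun l' =>
      (List.ofFn fun i : Fin r =>
        v i.castSucc.castSucc ++ wpow (w i.castSucc) (l' i)).flatten with hpredef
    -- membership description
    have hmem : ∀ u : List (Fin k),
        u ∈ {u | ∃ l : Fin (r + 1) → ℕ,
          u = (List.ofFn fun i : Fin (r + 1) => v i.castSucc ++ wpow (w i) (l i)).flatten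
            ++ v (Fin.last (r + 1))}
        ↔ ∃ (l' : Fin r → ℕ) (lr : ℕ),
            u = pre l' ++ (vpen ++ (wpow W lr ++ vfin)) := by
      intro u
      constructor
      · rintro ⟨l, rfl⟩
        refine ⟨fun i => l i.castSucc, l (Fin.last r), ?_⟩
        rw [List.ofFn_succ']
        simp [hpredef, List.concat_eq_append, List.append_assoc, hvpendef, hWdef, hvfindef]
      · rintro ⟨l', lr, rfl⟩
        refine ⟨Fin.snoc l' lr, ?_⟩
        rw [List.ofFn_succ']
        simp [hpredef, List.concat_eq_append, Fin.snoc_castSucc, Fin.snoc_last,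
          List.append_assoc, hvpendef, hWdef, hvfindef]
    -- the fixed-last-exponent slices
    set SS : ℕ → Set (List (Fin k)) := fun lr =>
      {u | ∃ l' : Fin r → ℕ, u = pre l' ++ (vpen ++ (wpow W lr ++ vfin))} with hSSdef
    have hSSbasic : ∀ lr : ℕ, IsBasicArid k r (SS lr) := by
      intro lr
      refine ⟨Fin.snoc (fun j : Fin r => v j.castSucc.castSucc)
        (vpen ++ (wpow W lr ++ vfin)), fun j => w j.castSucc, ?_⟩
      ext u
      constructor
      · rintro ⟨l', rfl⟩
        refine ⟨l', ?_⟩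
        simp [hpredef, Fin.snoc_castSucc, Fin.snoc_last, List.append_assoc]
      · rintro ⟨l', rfl⟩
        refine ⟨l', ?_⟩
        simp [hpredef, Fin.snoc_castSucc, Fin.snoc_last, List.append_assoc]
    by_cases hW0 : W = []
    · -- degenerate case: last pumping word is empty
      have hEq : {u : List (Fin k) | ∃ l : Fin (r + 1) → ℕ,
          u = (List.ofFn fun i : Fin (r + 1) => v i.castSucc ++ wpow (w i) (l i)).flatten
            ++ v (Fin.last (r + 1))} = SS 0 := by
        ext u
        rw [hmem u]
        constructor
        · rintro ⟨l', lr, rfl⟩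
          exact ⟨l', by rw [hW0, wpow_nil_word, wpow_zero]⟩
        · rintro ⟨l', rfl⟩
          exact ⟨l', 0, rfl⟩
      rw [hEq]
      calc ((wordVal k '' SS 0) ∩ I).ncard ≤ (t + 2) ^ r := ih (SS 0) (hSSbasic 0) M
        _ ≤ (t + 2) ^ (r + 1) := Nat.pow_le_pow_right (by omega) (Nat.le_succ r)
    · have hWlen : 0 < W.length := List.length_pos_iff.mpr hW0
      set c := wordVal k (wpow W t ++ vfin) with hcdef
      have hmod : ∀ lr : ℕ, t ≤ lr → wordVal k (wpow W lr ++ vfin) ≡ c [MOD k ^ t] := by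
        intro lr hlr
        induction lr, hlr using Nat.le_induction with
        | base => rfl
        | succ n hn ihn =>
          rw [wpow_succ, List.append_assoc, wordVal_append]
          have hdvd : k ^ t ∣ wordVal k W * k ^ (wpow W n ++ vfin).length := by
            apply Dvd.dvd.mul_left
            apply pow_dvd_pow
            rw [List.length_append, wpow_length]
            calc t ≤ n := hn
              _ ≤ n * W.length := Nat.le_mul_of_pos_right n hWlen
              _ ≤ n * W.length + vfin.length := Nat.le_add_right _ _
          calc wordVal k W * k ^ (wpow W n ++ vfin).length + wordVal k (wpow W n ++ vfin)
              ≡ 0 + wordVal k (wpow W n ++ vfin) [MOD k ^ t] :=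
                Nat.ModEq.add_right _ (Nat.modEq_zero_iff_dvd.mpr hdvd)
            _ = wordVal k (wpow W n ++ vfin) := zero_add _
            _ ≡ c [MOD k ^ t] := ihn
      have hsub : (wordVal k '' {u | ∃ l : Fin (r + 1) → ℕ,
          u = (List.ofFn fun i : Fin (r + 1) => v i.castSucc ++ wpow (w i) (l i)).flatten
            ++ v (Fin.last (r + 1))}) ∩ I
          ⊆ (⋃ lr ∈ Finset.range t, ((wordVal k '' SS lr) ∩ I))
            ∪ {x ∈ I | x ≡ c [MOD k ^ t]} := by
        rintro x ⟨⟨u, hu, rfl⟩, hxI⟩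
        rw [hmem u] at hu
        obtain ⟨l', lr, rfl⟩ := hu
        by_cases hlr : lr < t
        · left
          exact Set.mem_iUnion₂.mpr ⟨lr, Finset.mem_range.mpr hlr,
            ⟨⟨_, ⟨l', rfl⟩, rfl⟩, hxI⟩⟩
        · right
          refine ⟨hxI, ?_⟩
          push_neg at hlr
          have hassoc : pre l' ++ (vpen ++ (wpow W lr ++ vfin))
              = (pre l' ++ vpen) ++ (wpow W lr ++ vfin) := by
            rw [List.append_assoc]
          rw [hassoc, wordVal_append]
          have hdvd : k ^ t ∣ wordVal k (pre l' ++ vpen) * k ^ (wpow W lr ++ vfin).length := by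
            apply Dvd.dvd.mul_left
            apply pow_dvd_pow
            rw [List.length_append, wpow_length]
            calc t ≤ lr := hlr
              _ ≤ lr * W.length := Nat.le_mul_of_pos_right lr hWlen
              _ ≤ lr * W.length + vfin.length := Nat.le_add_right _ _
          calc wordVal k (pre l' ++ vpen) * k ^ (wpow W lr ++ vfin).length
                + wordVal k (wpow W lr ++ vfin)
              ≡ 0 + wordVal k (wpow W lr ++ vfin) [MOD k ^ t] :=
                Nat.ModEq.add_right _ (Nat.modEq_zero_iff_dvd.mpr hdvd)
            _ = wordVal k (wpow W lr ++ vfin) := zero_add _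
            _ ≡ c [MOD k ^ t] := hmod lr hlr
      have hfin2 : ({x ∈ I | x ≡ c [MOD k ^ t]} : Set ℕ).Finite :=
        hIfin.subset (Set.sep_subset _ _)
      have hUfin : (⋃ lr ∈ Finset.range t, ((wordVal k '' SS lr) ∩ I)).Finite :=
        Set.Finite.biUnion (Finset.range t).finite_toSet
          (fun lr _ => hIfin.subset Set.inter_subset_right)
      have hone : ({x ∈ I | x ≡ c [MOD k ^ t]} : Set ℕ).ncard ≤ 1 := by
        rw [Set.ncard_le_one hfin2]
        rintro a ⟨haI, hac⟩ b ⟨hbI, hbc⟩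
        have hab : a ≡ b [MOD k ^ t] := hac.trans hbc.symm
        apply hab.eq_of_abs_lt
        rw [abs_sub_lt_iff]
        rw [hIdef, Set.mem_Ico] at haI hbI
        constructor <;> omega
      calc ((wordVal k '' _) ∩ I).ncard
          ≤ ((⋃ lr ∈ Finset.range t, ((wordVal k '' SS lr) ∩ I))
              ∪ {x ∈ I | x ≡ c [MOD k ^ t]}).ncard :=
            Set.ncard_le_ncard hsub (hUfin.union hfin2)
        _ ≤ (⋃ lr ∈ Finset.range t, ((wordVal k '' SS lr) ∩ I)).ncard
              + ({x ∈ I | x ≡ c [MOD k ^ t]} : Set ℕ).ncard := Set.ncard_union_le _ _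
        _ ≤ (∑ lr ∈ Finset.range t, ((wordVal k '' SS lr) ∩ I).ncard) + 1 :=
            add_le_add (ncard_biUnion_le _ _) hone
        _ ≤ (∑ _lr ∈ Finset.range t, (t + 2) ^ r) + 1 :=
            Nat.add_le_add_right (Finset.sum_le_sum fun lr _ => ih (SS lr) (hSSbasic lr) M) 1
        _ = t * (t + 2) ^ r + 1 := by rw [Finset.sum_const, Finset.card_range, smul_eq_mul]
        _ ≤ (t + 2) ^ (r + 1) := by
            have h1 : 1 ≤ (t + 2) ^ r := Nat.one_le_pow _ _ (by omega)
            rw [pow_succ]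
            nlinarith

/-- A `k`-arid set `E ⊆ ℕ` of rank `≤ r` satisfies
`max_M |E ∩ [M, M+N)| ≤ C (log N)^r` for all `N ≥ 2`. -/
theorem stmt_8 (k r : ℕ) (hk : 2 ≤ k) (E : Set ℕ) (hE : IsAridNat k r E) :
    ∃ C : ℝ, ∀ N : ℕ, 2 ≤ N → ∀ M : ℕ,
      ((E ∩ Set.Ico M (M + N)).ncard : ℝ) ≤ C * (Real.log N) ^ r := by
  obtain ⟨A, ⟨m, B, hB, rfl⟩, rfl⟩ := hE
  refine ⟨(m : ℝ) * (4 / Real.log 2) ^ r, ?_⟩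
  intro N hN M
  have hk1 : 1 < k := hk
  set t := Nat.clog k N with htdef
  have hnat : ((wordVal k '' ⋃ i, B i) ∩ Set.Ico M (M + N)).ncard ≤ m * (t + 2) ^ r := by
    rw [Set.image_iUnion, Set.iUnion_inter]
    have hrw : (⋃ i, (wordVal k '' B i) ∩ Set.Ico M (M + N))
        = ⋃ i ∈ (Finset.univ : Finset (Fin m)), ((wordVal k '' B i) ∩ Set.Ico M (M + N)) := by
      simp
    rw [hrw]
    calc (⋃ i ∈ (Finset.univ : Finset (Fin m)),
            ((wordVal k '' B i) ∩ Set.Ico M (M + N))).ncard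
        ≤ ∑ i : Fin m, ((wordVal k '' B i) ∩ Set.Ico M (M + N)).ncard :=
          ncard_biUnion_le _ _
      _ ≤ ∑ _i : Fin m, (t + 2) ^ r :=
          Finset.sum_le_sum fun i _ => basic_bound k hk N hN r (B i) (hB i) M
      _ = m * (t + 2) ^ r := by
          rw [Finset.sum_const, Finset.card_univ, Fintype.card_fin, smul_eq_mul]
  have hlog2 : (0 : ℝ) < Real.log 2 := Real.log_pos one_lt_two
  have ht1 : 1 ≤ t := Nat.clog_pos hk1 hN
  have hpow : (k : ℝ) ^ (t - 1) < (N : ℝ) := by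
    exact_mod_cast Nat.pow_pred_clog_lt_self hk1 (by omega : 1 < N)
  have hlogk : Real.log 2 ≤ Real.log k :=
    Real.log_le_log (by norm_num) (by exact_mod_cast hk)
  have hlog : ((t : ℝ) - 1) * Real.log 2 ≤ Real.log N := by
    have h1 : ((t - 1 : ℕ) : ℝ) * Real.log k ≤ Real.log N := by
      rw [← Real.log_pow]
      exact Real.log_le_log (by positivity) (le_of_lt hpow)
    have h2 : ((t - 1 : ℕ) : ℝ) = (t : ℝ) - 1 := by
      push_cast [Nat.cast_sub ht1]; ring
    rw [h2] at h1
    have h3 : (0 : ℝ) ≤ (t : ℝ) - 1 := sub_nonneg.mpr (by exact_mod_cast ht1)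
    nlinarith [mul_le_mul_of_nonneg_left hlogk h3, h1]
  have hX : (1 : ℝ) ≤ Real.log N / Real.log 2 := by
    rw [le_div_iff₀ hlog2]
    have : Real.log 2 ≤ Real.log N := Real.log_le_log (by norm_num) (by exact_mod_cast hN)
    linarith
  have hT : ((t : ℝ) + 2) ≤ 4 / Real.log 2 * Real.log N := by
    have h2 : (t : ℝ) - 1 ≤ Real.log N / Real.log 2 := by
      rw [le_div_iff₀ hlog2]; exact hlog
    have h4 : 4 / Real.log 2 * Real.log N = 4 * (Real.log N / Real.log 2) := by ring
    rw [h4]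
    linarith
  calc (((wordVal k '' ⋃ i, B i) ∩ Set.Ico M (M + N)).ncard : ℝ)
      ≤ ((m * (t + 2) ^ r : ℕ) : ℝ) := by exact_mod_cast hnat
    _ = (m : ℝ) * ((t : ℝ) + 2) ^ r := by push_cast; ring
    _ ≤ (m : ℝ) * (4 / Real.log 2 * Real.log N) ^ r :=
        mul_le_mul_of_nonneg_left (pow_le_pow_left₀ (by positivity) hT r) (Nat.cast_nonneg m)
    _ = (m : ℝ) * (4 / Real.log 2) ^ r * Real.log N ^ r := by rw [mul_pow]; ring
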